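/- arXiv:2105.04994 — 3 statements merged into one kernel-verified Lean document; each statement's English description precedes it below -/
import Mathlib

section
/- Let (X_n)_{n≥0} be a critical RDE-chain with associated random vector (M,Q) in [0,∞)^2 satisfying P(M=0)=0, P(Q=0)<1, and the criticality condition liminf_n Π_n=0 and limsup_n Π_n=+∞ a.s. Then the chain is locally contractive: for every compact set K⊂ℝ and all x,y≥0, |X_n^x−X_n^y|·1{X_n^x∈K} → 0 almost surely as n→∞. -/
open MeasureTheory ProbabilityTheory Filter

lemma aux_levy {Ω : Type*} [MeasurableSpace Ω] (P : Measure Ω) [IsProbabilityMeasure P]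
    (f : ℕ → Ω → ℝ × ℝ) (hfm : ∀ n, Measurable (f n))
    (hindep : iIndepFun f P)
    (hident : ∀ n, IdentDistrib (f n) (f 0) P P)
    (t : ℝ) (S : Set (ℝ × ℝ)) (hS : MeasurableSet S) (hp : 0 < P (f 0 ⁻¹' S)) :
    ∀ᵐ ω ∂P, (∃ᶠ n in atTop, (∏ k ∈ Finset.range n, (f k ω).1) ≤ t) →
      ∃ᶠ n in atTop, ((∏ k ∈ Finset.range n, (f k ω).1) ≤ t ∧ f n ω ∈ S) := by
  classical
  set hsm : ∀ n, StronglyMeasurable (f n) := fun n => (hfm n).stronglyMeasurable with hsm_def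
  set ℱ := Filtration.natural f hsm with hℱ
  have hadp : ∀ k, StronglyMeasurable[ℱ k] (f k) := Filtration.stronglyAdapted_natural hsm
  have hfk : ∀ k n : ℕ, k ≤ n → Measurable[ℱ n] (f k) :=
    fun k n hk => ((hadp k).measurable).mono (ℱ.mono hk) le_rfl
  have hPim : ∀ n j : ℕ, n ≤ j + 1 → Measurable[ℱ j] (fun ω => ∏ k ∈ Finset.range n, (f k ω).1) := by
    intro n j hn
    apply Finset.measurable_prod
    intro k hk
    have : k ≤ j := by
      have := Finset.mem_range.1 hk; omega
    exact measurable_fst.comp (hfk k j this)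
  set s : ℕ → Set Ω := fun n => {ω | (∏ k ∈ Finset.range n, (f k ω).1) ≤ t} ∩ (f n ⁻¹' S) with hs_def
  have hs : ∀ n, MeasurableSet[ℱ n] (s n) := by
    intro n
    refine MeasurableSet.inter ?_ ?_
    · exact measurableSet_le (hPim n n (by omega)) measurable_const
    · exact hfk n n le_rfl hS
  set p : ℝ := (P (f 0 ⁻¹' S)).toReal with hp_def
  have hppos : 0 < p := ENNReal.toReal_pos hp.ne' (measure_ne_top _ _)
  -- conditional expectation computation
  have hcond : ∀ k : ℕ, (P[(s (k+1)).indicator (1 : Ω → ℝ)|ℱ k]) =ᵐ[P]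
      ({ω | (∏ i ∈ Finset.range (k+1), (f i ω).1) ≤ t}).indicator (fun _ => p) := by
    intro k
    have hA : MeasurableSet[ℱ k] {ω | (∏ i ∈ Finset.range (k+1), (f i ω).1) ≤ t} :=
      measurableSet_le (hPim (k+1) k le_rfl) measurable_const
    have hBm : MeasurableSet[MeasurableSpace.comap (f (k+1)) inferInstance] (f (k+1) ⁻¹' S) :=
      ⟨S, hS, rfl⟩
    have hint : Integrable ((f (k+1) ⁻¹' S).indicator (1 : Ω → ℝ)) P := by
      refine (integrable_const (1:ℝ)).indicator ?_
      exact (hfm (k+1)) hS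
    have h1 : (s (k+1)).indicator (1 : Ω → ℝ) =
        ({ω | (∏ i ∈ Finset.range (k+1), (f i ω).1) ≤ t}).indicator
          ((f (k+1) ⁻¹' S).indicator (1 : Ω → ℝ)) := by
      rw [Set.indicator_indicator]
    have h2 : (P[(f (k+1) ⁻¹' S).indicator (1 : Ω → ℝ)|ℱ k]) =ᵐ[P]
        fun _ => ∫ ω, (f (k+1) ⁻¹' S).indicator (1 : Ω → ℝ) ω ∂P :=
      condExp_indep_eq (m₁ := MeasurableSpace.comap (f (k+1)) inferInstance)
        ((hfm (k+1)).comap_le) (ℱ.le k)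
        (stronglyMeasurable_const.indicator hBm)
        (hindep.indep_comap_natural_of_lt hsm (Nat.lt_succ_self k))
    have h3 : (∫ ω, (f (k+1) ⁻¹' S).indicator (1 : Ω → ℝ) ω ∂P) = p := by
      rw [integral_indicator_one ((hfm (k+1)) hS), measureReal_def, hp_def,
        (hident (k+1)).measure_mem_eq hS]
    rw [h1]
    refine (condExp_indicator hint hA).trans ?_
    filter_upwards [h2] with ω hω
    by_cases hmem : ω ∈ {ω | (∏ i ∈ Finset.range (k+1), (f i ω).1) ≤ t}
    · rw [Set.indicator_of_mem hmem, Set.indicator_of_mem hmem, hω, h3]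
    · rw [Set.indicator_of_notMem hmem, Set.indicator_of_notMem hmem]
  -- Lévy's generalized Borel–Cantelli
  have hlevy := ae_mem_limsup_atTop_iff (ℱ := ℱ) P hs
  have hae : ∀ᵐ ω ∂P, ∀ k, (P[(s (k+1)).indicator (1 : Ω → ℝ)|ℱ k]) ω =
      ({ω | (∏ i ∈ Finset.range (k+1), (f i ω).1) ≤ t}).indicator (fun _ => p) ω :=
    ae_all_iff.2 fun k => hcond k
  filter_upwards [hlevy, hae] with ω hω hωc hfreq
  have hmem : ω ∈ limsup s atTop := by
    rw [hω]
    set c : ℕ → ℕ := fun n => ((Finset.range n).filter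
        (fun k => (∏ i ∈ Finset.range (k+1), (f i ω).1) ≤ t)).card with hc_def
    have hSn : ∀ n, ∑ k ∈ Finset.range n,
        (P[(s (k+1)).indicator (1 : Ω → ℝ)|ℱ k]) ω = (c n : ℝ) * p := by
      intro n
      have : ∀ k, (P[(s (k+1)).indicator (1 : Ω → ℝ)|ℱ k]) ω
          = if (∏ i ∈ Finset.range (k+1), (f i ω).1) ≤ t then p else 0 := by
        intro k
        rw [hωc k]
        simp [Set.indicator_apply]
      simp_rw [this]
      rw [← Finset.sum_filter, Finset.sum_const, nsmul_eq_mul]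
    have hcmono : Monotone c := by
      intro a b hab
      exact Finset.card_le_card (Finset.filter_subset_filter _
        (Finset.range_subset_range.2 hab))
    have hcunbdd : ∀ m : ℕ, ∃ n, m ≤ c n := by
      intro m
      induction m with
      | zero => exact ⟨0, Nat.zero_le _⟩
      | succ m ih =>
        obtain ⟨n, hn⟩ := ih
        obtain ⟨j, hj, hjt⟩ := (frequently_atTop.1 hfreq) (n + 1)
        -- j ≥ n+1 and Π_j ≤ t; write j = k+1 with k ≥ n
        obtain ⟨k, rfl⟩ : ∃ k, j = k + 1 := ⟨j - 1, by omega⟩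
        refine ⟨k + 1, ?_⟩
        have hkmem : k ∈ (Finset.range (k+1)).filter
            (fun i => (∏ l ∈ Finset.range (i+1), (f l ω).1) ≤ t) := by
          simp [Finset.mem_filter, hjt]
        have hsub : insert k ((Finset.range n).filter
            (fun i => (∏ l ∈ Finset.range (i+1), (f l ω).1) ≤ t)) ⊆
            (Finset.range (k+1)).filter
            (fun i => (∏ l ∈ Finset.range (i+1), (f l ω).1) ≤ t) := by
          intro a ha
          rcases Finset.mem_insert.1 ha with rfl | ha
          · exact hkmem
          · refine Finset.mem_filter.2 ⟨?_, (Finset.mem_filter.1 ha).2⟩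
            have := Finset.mem_range.1 (Finset.mem_filter.1 ha).1
            exact Finset.mem_range.2 (by omega)
        have hnotmem : k ∉ (Finset.range n).filter
            (fun i => (∏ l ∈ Finset.range (i+1), (f l ω).1) ≤ t) := by
          intro hk
          have := Finset.mem_range.1 (Finset.mem_filter.1 hk).1
          omega
        have := Finset.card_le_card hsub
        rw [Finset.card_insert_of_notMem hnotmem] at this
        have : c n + 1 ≤ c (k+1) := this
        omega
    have hctends : Tendsto c atTop atTop :=
      tendsto_atTop_atTop_of_monotone hcmono hcunbdd
    have : Tendsto (fun n => (c n : ℝ) * p) atTop atTop := by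
      exact Tendsto.atTop_mul_const hppos
        (tendsto_natCast_atTop_atTop.comp hctends)
    simpa only [hSn] using this
  rwa [mem_limsup_iff_frequently_mem] at hmem

/-- A critical RDE-chain with associated random vector `(M,Q)` in `[0,∞)²`
satisfying `P(M=0)=0`, `P(Q=0)<1` and the criticality condition
`liminf Πₙ = 0`, `limsup Πₙ = ∞` a.s. is locally contractive. -/
theorem critical_RDE_chain_locally_contractive
    {Ω : Type*} [MeasurableSpace Ω] (P : Measure Ω) [IsProbabilityMeasure P]
    (M Q : ℕ → Ω → ℝ)
    (hMmeas : ∀ n, Measurable (M n)) (hQmeas : ∀ n, Measurable (Q n))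
    (hMnonneg : ∀ n ω, 0 ≤ M n ω) (hQnonneg : ∀ n ω, 0 ≤ Q n ω)
    (hindep : iIndepFun (fun n ω => (M n ω, Q n ω)) P)
    (hident : ∀ n, IdentDistrib (fun ω => (M n ω, Q n ω)) (fun ω => (M 0 ω, Q 0 ω)) P P)
    (hM0 : P {ω | M 0 ω = 0} = 0)
    (hQ0 : P {ω | Q 0 ω = 0} < 1)
    (Pi : ℕ → Ω → ℝ) (hPi : ∀ n ω, Pi n ω = ∏ k ∈ Finset.range n, M k ω)
    (hcrit : ∀ᵐ ω ∂P, (∀ ε > (0:ℝ), ∃ᶠ n in atTop, Pi n ω < ε) ∧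
      (∀ c : ℝ, ∃ᶠ n in atTop, c < Pi n ω))
    (X : ℝ → ℕ → Ω → ℝ)
    (hX0 : ∀ x ω, X x 0 ω = x)
    (hXrec : ∀ x n ω, X x (n+1) ω = M n ω * X x n ω + Q n ω) :
    ∀ K : Set ℝ, IsCompact K → ∀ x y : ℝ, 0 ≤ x → 0 ≤ y →
      ∀ᵐ ω ∂P, Tendsto
        (fun n => |X x n ω - X y n ω| * Set.indicator K (fun _ => (1:ℝ)) (X x n ω))
        atTop (nhds 0) := by
  classical
  intro K hK x y hx hy
  set f : ℕ → Ω → ℝ × ℝ := fun n ω => (M n ω, Q n ω) with hf_def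
  have hfm : ∀ n, Measurable (f n) := fun n => (hMmeas n).prodMk (hQmeas n)
  -- a.s. all M n are positive
  have hMpos : ∀ᵐ ω ∂P, ∀ n, 0 < M n ω := by
    rw [ae_all_iff]
    intro n
    have h0 : P {ω | M n ω = 0} = 0 := by
      have h1 : {ω | M n ω = 0} = f n ⁻¹' {p : ℝ × ℝ | p.1 = 0} := rfl
      have h2 : MeasurableSet {p : ℝ × ℝ | p.1 = 0} :=
        measurableSet_eq_fun measurable_fst measurable_const
      rw [h1, (hident n).measure_mem_eq h2]
      exact hM0
    filter_upwards [measure_eq_zero_iff_ae_notMem.1 h0] with ω hω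
    exact lt_of_le_of_ne (hMnonneg n ω) (Ne.symm hω)
  -- bound for K
  obtain ⟨R, hR⟩ := hK.isBounded.exists_norm_le
  set C : ℝ := max R 1 with hC_def
  have hCpos : (0:ℝ) < C := lt_of_lt_of_le one_pos (le_max_right _ _)
  have hCK : ∀ z ∈ K, z ≤ C := fun z hz =>
    le_trans (le_trans (le_abs_self z) (hR z hz)) (le_max_left _ _)
  -- nonnegativity of chain
  have hXnonneg : ∀ n ω, 0 ≤ X x n ω := by
    intro n ω
    induction n with
    | zero => rw [hX0]; exact hx
    | succ n ih =>
      rw [hXrec]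
      have := hMnonneg n ω
      have := hQnonneg n ω
      nlinarith
  -- difference formula
  have hdiff : ∀ n ω, X x n ω - X y n ω = Pi n ω * (x - y) := by
    intro n ω
    induction n with
    | zero => rw [hX0, hX0, hPi]; simp
    | succ n ih =>
      rw [hXrec, hXrec, hPi, Finset.prod_range_succ, ← hPi]
      have h1 : M n ω * X x n ω + Q n ω - (M n ω * X y n ω + Q n ω)
          = M n ω * (X x n ω - X y n ω) := by ring
      rw [h1, ih]; ring
  -- lower bound : Q j contributes to X x n
  have hlow : ∀ ω j n, j + 1 ≤ n →
      (∏ k ∈ Finset.Ico (j+1) n, M k ω) * Q j ω ≤ X x n ω := by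
    intro ω j n hn
    induction n, hn using Nat.le_induction with
    | base =>
      rw [Finset.Ico_self, Finset.prod_empty, one_mul, hXrec]
      nlinarith [hMnonneg j ω, hXnonneg j ω]
    | succ n hn ih =>
      rw [Finset.prod_Ico_succ_top hn, hXrec]
      have hM := hMnonneg n ω
      have hQ := hQnonneg n ω
      nlinarith [ih, hXnonneg n ω]
  -- key a.e. statement for each threshold 1/(m+1)
  have key : ∀ m : ℕ, ∀ᵐ ω ∂P,
      ∀ᶠ n in atTop, ¬((1/((m:ℝ)+1)) ≤ Pi n ω ∧ X x n ω ∈ K) := by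
    intro m
    set c : ℝ := C * ((m:ℝ)+1) with hc_def
    have hcpos : 0 < c := by positivity
    -- choose t > 0 with positive probability
    have hQpos : 0 < P {ω | 0 < Q 0 ω} := by
      have heq : {ω | 0 < Q 0 ω} = {ω | Q 0 ω = 0}ᶜ := by
        ext ω
        simp only [Set.mem_setOf_eq, Set.mem_compl_iff]
        constructor
        · intro h h'; rw [h'] at h; exact lt_irrefl _ h
        · intro h; exact lt_of_le_of_ne (hQnonneg 0 ω) (Ne.symm h)
      have hms : MeasurableSet {ω | Q 0 ω = 0} :=
        measurableSet_eq_fun (hQmeas 0) measurable_const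
      rw [heq, measure_compl hms (measure_ne_top _ _), measure_univ]
      exact tsub_pos_iff_lt.2 hQ0
    obtain ⟨t, htpos, htp⟩ : ∃ t : ℝ, 0 < t ∧ 0 < P {ω | c * t * M 0 ω < Q 0 ω} := by
      by_contra hcon
      push_neg at hcon
      have hz : ∀ k : ℕ, P {ω | c * (1/((k:ℝ)+1)) * M 0 ω < Q 0 ω} = 0 := by
        intro k
        have h1 : (0:ℝ) < 1/((k:ℝ)+1) := by positivity
        have := hcon (1/((k:ℝ)+1)) h1
        exact le_antisymm this zero_le
      have hsub : {ω | 0 < Q 0 ω} ⊆ ⋃ k : ℕ, {ω | c * (1/((k:ℝ)+1)) * M 0 ω < Q 0 ω} := by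
        intro ω hω
        simp only [Set.mem_setOf_eq] at hω
        obtain ⟨k, hk⟩ := exists_nat_gt (c * M 0 ω / Q 0 ω)
        refine Set.mem_iUnion.2 ⟨k, ?_⟩
        simp only [Set.mem_setOf_eq]
        rw [div_lt_iff₀ hω] at hk
        have h2 : c * M 0 ω < ((k:ℝ)+1) * Q 0 ω := by nlinarith [hω]
        have h3 : (0:ℝ) < (k:ℝ)+1 := by positivity
        have h4 : c * (1/((k:ℝ)+1)) * M 0 ω = (c * M 0 ω) / ((k:ℝ)+1) := by ring
        rw [h4, div_lt_iff₀ h3]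
        nlinarith
      have : P {ω | 0 < Q 0 ω} = 0 :=
        le_antisymm (le_trans (measure_mono hsub) (le_of_eq (measure_iUnion_null hz)))
          zero_le
      rw [this] at hQpos
      exact lt_irrefl _ hQpos
    -- apply the Lévy Borel–Cantelli auxiliary lemma
    have hSmeas : MeasurableSet {p : ℝ × ℝ | c * t * p.1 < p.2} :=
      measurableSet_lt (measurable_const.mul measurable_fst) measurable_snd
    have hpre : f 0 ⁻¹' {p : ℝ × ℝ | c * t * p.1 < p.2} = {ω | c * t * M 0 ω < Q 0 ω} := rfl
    have hlevy := aux_levy P f hfm hindep hident t {p : ℝ × ℝ | c * t * p.1 < p.2}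
      hSmeas (by rw [hpre]; exact htp)
    filter_upwards [hlevy, hcrit, hMpos] with ω hω hcritω hMω
    by_contra hcon
    rw [not_eventually] at hcon
    push_neg at hcon
    -- ω has : frequently (1/(m+1) ≤ Pi n ∧ X x n ∈ K)
    have hPiprod : ∀ n, Pi n ω = ∏ k ∈ Finset.range n, (f k ω).1 := fun n => hPi n ω
    have hfreqP : ∃ᶠ n in atTop, (∏ k ∈ Finset.range n, (f k ω).1) ≤ t := by
      have := hcritω.1 t htpos
      exact this.mono (fun n hn => by rw [← hPiprod]; exact hn.le)
    have hfreqS := hω hfreqP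
    have hPipos : ∀ n, 0 < Pi n ω := by
      intro n
      rw [hPi]
      exact Finset.prod_pos (fun k _ => hMω k)
    -- all Q j are dominated
    have hQb : ∀ j : ℕ, Q j ω ≤ c * Pi (j+1) ω := by
      intro j
      obtain ⟨n, hn, hδ, hXK⟩ := (frequently_atTop.1 hcon) (j+1)
      have hXC : X x n ω ≤ C := hCK _ hXK
      have hA : (∏ k ∈ Finset.Ico (j+1) n, M k ω) * Q j ω ≤ C :=
        le_trans (hlow ω j n hn) hXC
      have hsplit : Pi (j+1) ω * (∏ k ∈ Finset.Ico (j+1) n, M k ω) = Pi n ω := by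
        rw [hPi, hPi]
        exact Finset.prod_range_mul_prod_Ico _ hn
      have hApos : 0 < ∏ k ∈ Finset.Ico (j+1) n, M k ω :=
        Finset.prod_pos (fun k _ => hMω k)
      have hQj := hQnonneg j ω
      have hPij := hPipos (j+1)
      have hPin := hPipos n
      -- from 1/(m+1) ≤ Pi n = Pi(j+1) * A and A * Q j ≤ C
      have h1 : Q j ω * (1/((m:ℝ)+1)) ≤ Pi (j+1) ω * C := by
        calc Q j ω * (1/((m:ℝ)+1)) ≤ Q j ω * Pi n ω := by
              apply mul_le_mul_of_nonneg_left hδ hQj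
        _ = Pi (j+1) ω * ((∏ k ∈ Finset.Ico (j+1) n, M k ω) * Q j ω) := by
              rw [← hsplit]; ring
        _ ≤ Pi (j+1) ω * C := by
              apply mul_le_mul_of_nonneg_left hA hPij.le
      have hm1 : (0:ℝ) < (m:ℝ)+1 := by positivity
      have h2 := mul_le_mul_of_nonneg_left h1 hm1.le
      have h3 : ((m:ℝ)+1) * (Q j ω * (1/((m:ℝ)+1))) = Q j ω := by field_simp
      rw [h3] at h2
      rw [hc_def]
      calc Q j ω ≤ ((m:ℝ)+1) * (Pi (j+1) ω * C) := h2
      _ = C * ((m:ℝ)+1) * Pi (j+1) ω := by ring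
    -- contradiction with the frequent event
    obtain ⟨n, -, hPt, hQn⟩ := (frequently_atTop.1 hfreqS) 0
    rw [← hPiprod] at hPt
    have hPisucc : Pi (n+1) ω = Pi n ω * M n ω := by
      rw [hPi, hPi, Finset.prod_range_succ]
    have hMn := (hMω n).le
    have : c * Pi (n+1) ω < Q n ω := by
      calc c * Pi (n+1) ω = c * Pi n ω * M n ω := by rw [hPisucc]; ring
      _ ≤ c * t * M n ω :=
            mul_le_mul_of_nonneg_right (mul_le_mul_of_nonneg_left hPt hcpos.le) hMn
      _ < Q n ω := hQn
    exact absurd (hQb n) (not_le.2 this)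
  -- assemble
  have hae : ∀ᵐ ω ∂P, ∀ m : ℕ,
      ∀ᶠ n in atTop, ¬((1/((m:ℝ)+1)) ≤ Pi n ω ∧ X x n ω ∈ K) := ae_all_iff.2 key
  filter_upwards [hae] with ω hω
  rw [NormedAddCommGroup.tendsto_nhds_zero]
  intro ε hε
  have hPinn : ∀ n, 0 ≤ Pi n ω := by
    intro n; rw [hPi]; exact Finset.prod_nonneg (fun k _ => hMnonneg k ω)
  have habs : ∀ n, |X x n ω - X y n ω| = Pi n ω * |x - y| := by
    intro n; rw [hdiff, abs_mul, abs_of_nonneg (hPinn n)]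
  rcases eq_or_ne x y with rfl | hxy
  · refine Eventually.of_forall (fun n => ?_)
    rw [Real.norm_eq_abs]
    have : |X x n ω - X x n ω| = 0 := by simp
    rw [this, zero_mul, abs_zero]
    exact hε
  · have hxy' : 0 < |x - y| := abs_pos.2 (sub_ne_zero.2 hxy)
    obtain ⟨m, hm⟩ := exists_nat_gt (|x - y| / ε)
    filter_upwards [hω m] with n hn
    rw [Real.norm_eq_abs]
    by_cases hXK : X x n ω ∈ K
    · have hδ : Pi n ω < 1/((m:ℝ)+1) := by
        by_contra h
        exact hn ⟨not_lt.1 h, hXK⟩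
      rw [Set.indicator_of_mem hXK, mul_one, abs_abs, habs]
      have hm1 : (0:ℝ) < (m:ℝ)+1 := by positivity
      have h2 : |x - y| < ε * ((m:ℝ)+1) := by
        rw [div_lt_iff₀ hε] at hm
        nlinarith
      calc Pi n ω * |x - y| < (1/((m:ℝ)+1)) * |x - y| :=
            mul_lt_mul_of_pos_right hδ hxy'
      _ < ε := by
            rw [div_mul_eq_mul_div, div_lt_iff₀ hm1, one_mul]
            linarith
    · rw [Set.indicator_of_notMem hXK, mul_zero, abs_zero]
      exact hε
end

section
/- Let (X_n)_{n≥0} be a critical RDE-chain with associated random vector (M,Q) in [0,∞)^2 satisfying P(M=0)=0, P(Q=0)<1, and the criticality condition liminf_n Π_n=0 and limsup_n Π_n=+∞ a.s., and let (X_{σ_n})_{n≥0} be the embedded ladder chain obtained by sampling at the strictly descending ladder epochs σ_n of S_n=log Π_n. Then (X_n)_{n≥0} is recurrent if and only if (X_{σ_n})_{n≥0} is recurrent; in particular, since X_{σ_n+k} ≥ X_{σ_n} a.s. for all n≥0 and 0≤k<σ_{n+1}−σ_n, transience of the ladder chain (X_{σ_n}^x → ∞ a.s.) implies transience of (X_n)_{n≥0}.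 -/
open MeasureTheory ProbabilityTheory Filter

private lemma aux_facts (M Q : ℕ → ℝ) (hMpos : ∀ n, 0 < M n) (hQnonneg : ∀ n, 0 ≤ Q n)
    (Pi : ℕ → ℝ) (hPi : ∀ n, Pi n = ∏ k ∈ Finset.range n, M k)
    (hfreq : ∀ ε > (0:ℝ), ∃ᶠ n in atTop, Pi n < ε)
    (S : ℕ → ℝ) (hS : ∀ n, S n = ∑ k ∈ Finset.range n, Real.log (M k))
    (σs : ℕ → ℕ) (hσ0 : σs 0 = 0)
    (hσ : ∀ n, σs (n+1) = sInf {k | σs n < k ∧ S k < S (σs n)})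
    (X : ℕ → ℝ) (x : ℝ) (hx : 0 ≤ x) (hX0 : X 0 = x)
    (hXrec : ∀ n, X (n+1) = M n * X n + Q n) :
    (∀ n k, k < σs (n+1) - σs n → X (σs n) ≤ X (σs n + k)) ∧
    (∀ C, (∃ᶠ n in atTop, |X n - x| ≤ C) → ∃ᶠ m in atTop, |X (σs m) - x| ≤ x + C) ∧
    (∀ C, (∃ᶠ m in atTop, |X (σs m) - x| ≤ C) → ∃ᶠ n in atTop, |X n - x| ≤ C) ∧
    (Tendsto (fun m => X (σs m)) atTop atTop → Tendsto X atTop atTop) := by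
  have hXnn : ∀ n, 0 ≤ X n := by
    intro n; induction n with
    | zero => rw [hX0]; exact hx
    | succ n ih => rw [hXrec]; exact add_nonneg (mul_nonneg (hMpos n).le ih) (hQnonneg n)
  have hB : ∀ m k, (∏ j ∈ Finset.range k, M (m+j)) * X m ≤ X (m+k) := by
    intro m k; induction k with
    | zero => simp
    | succ k ih =>
      rw [Finset.prod_range_succ, show m + (k+1) = (m+k)+1 from rfl, hXrec]
      have h1 : M (m+k) * ((∏ j ∈ Finset.range k, M (m+j)) * X m) ≤ M (m+k) * X (m+k) :=
        mul_le_mul_of_nonneg_left ih (hMpos _).le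
      have h2 : (∏ j ∈ Finset.range k, M (m+j)) * M (m+k) * X m
          = M (m+k) * ((∏ j ∈ Finset.range k, M (m+j)) * X m) := by ring
      have := hQnonneg (m+k)
      linarith
  have hPipos : ∀ n, 0 < Pi n := fun n => by
    rw [hPi]; exact Finset.prod_pos (fun i _ => hMpos i)
  have hSlog : ∀ n, S n = Real.log (Pi n) := fun n => by
    rw [hS, hPi, Real.log_prod (fun i _ => (hMpos i).ne')]
  have hK : ∀ m k, S m ≤ S (m+k) → X m ≤ X (m+k) := by
    intro m k h
    have hPile : Pi m ≤ Pi (m+k) := by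
      rw [hSlog, hSlog] at h
      exact (Real.log_le_log_iff (hPipos m) (hPipos (m+k))).mp h
    have hsplit : Pi (m+k) = Pi m * ∏ j ∈ Finset.range k, M (m+j) := by
      rw [hPi, hPi, Finset.prod_range_add]
    have hP1 : 1 ≤ ∏ j ∈ Finset.range k, M (m+j) := by
      rw [hsplit] at hPile
      exact (le_mul_iff_one_le_right (hPipos m)).mp hPile
    exact le_trans (le_mul_of_one_le_left (hXnn m) hP1) (hB m k)
  have hladder : ∀ m, ∃ k, m < k ∧ S k < S m := by
    intro m
    obtain ⟨n, hn, hlt⟩ := (frequently_atTop.mp (hfreq (Pi m) (hPipos m))) (m+1)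
    exact ⟨n, hn, by rw [hSlog, hSlog]; exact Real.log_lt_log (hPipos n) hlt⟩
  have hmem : ∀ n, σs n < σs (n+1) ∧ S (σs (n+1)) < S (σs n) := by
    intro n; rw [hσ]; exact Nat.sInf_mem (hladder (σs n))
  have hmono : StrictMono σs := strictMono_nat_of_lt_succ (fun n => (hmem n).1)
  have hmin : ∀ n j, σs n < j → j < σs (n+1) → S (σs n) ≤ S j := by
    intro n j h1 h2
    rw [hσ] at h2
    have h3 := Nat.notMem_of_lt_sInf h2
    exact le_of_not_gt (fun h => h3 ⟨h1, h⟩)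
  have c2 : ∀ n k, k < σs (n+1) - σs n → X (σs n) ≤ X (σs n + k) := by
    intro n k hk
    rcases Nat.eq_zero_or_pos k with rfl | hkpos
    · simp
    · exact hK _ k (hmin n _ (by omega) (by omega))
  have c4 : ∀ n, ∃ m, σs m ≤ n ∧ n < σs (m+1) := by
    intro n; induction n with
    | zero => exact ⟨0, hσ0.le, by have := (hmem 0).1; omega⟩
    | succ n ih =>
      obtain ⟨m, h1, h2⟩ := ih
      rcases lt_or_ge (n+1) (σs (m+1)) with h | h
      · exact ⟨m, by omega, h⟩
      · exact ⟨m+1, h, by have := (hmem (m+1)).1; omega⟩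
  have hge : ∀ m n, σs m ≤ n → n < σs (m+1) → X (σs m) ≤ X n := by
    intro m n h1 h2
    have := c2 m (n - σs m) (by omega)
    rwa [Nat.add_sub_cancel' h1] at this
  refine ⟨c2, ?_, ?_, ?_⟩
  · intro C hC
    have hC0 : 0 ≤ C := by
      obtain ⟨n, _, h⟩ := frequently_atTop.mp hC 0
      exact le_trans (abs_nonneg _) h
    rw [frequently_atTop]
    intro A
    obtain ⟨n, hn, h⟩ := frequently_atTop.mp hC (σs A)
    obtain ⟨m, h1, h2⟩ := c4 n
    have hmA : A ≤ m := by
      by_contra hc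
      have : σs (m+1) ≤ σs A := hmono.monotone (by omega)
      omega
    refine ⟨m, hmA, ?_⟩
    have hXle : X (σs m) ≤ X n := hge m n h1 h2
    have habs := abs_le.mp h
    rw [abs_le]
    constructor
    · have := hXnn (σs m); linarith
    · linarith [habs.2]
  · intro C hC
    rw [frequently_atTop]
    intro A
    obtain ⟨m, hm, h⟩ := frequently_atTop.mp hC A
    exact ⟨σs m, le_trans hm hmono.le_apply, h⟩
  · intro hT
    rw [tendsto_atTop_atTop]
    intro b
    obtain ⟨N, hN⟩ := tendsto_atTop_atTop.mp hT b
    refine ⟨σs N, fun n hn => ?_⟩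
    obtain ⟨m, h1, h2⟩ := c4 n
    have hmN : N ≤ m := by
      by_contra hc
      have : σs (m+1) ≤ σs N := hmono.monotone (by omega)
      omega
    exact le_trans (hN m hmN) (hge m n h1 h2)

/-- For a critical RDE-chain, recurrence is equivalent to recurrence of the
embedded ladder chain sampled at the strictly descending ladder epochs of `Sₙ = log Πₙ`;
moreover `X_{σₙ+k} ≥ X_{σₙ}` a.s. for `0 ≤ k < σ_{n+1} − σₙ`, and transience of the ladder
chain implies transience of the chain. -/
theorem recurrence_chain_iff_ladder_chain
    {Ω : Type*} [MeasurableSpace Ω] (P : Measure Ω) [IsProbabilityMeasure P]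
    (M Q : ℕ → Ω → ℝ)
    (hMmeas : ∀ n, Measurable (M n)) (hQmeas : ∀ n, Measurable (Q n))
    (hMnonneg : ∀ n ω, 0 ≤ M n ω) (hQnonneg : ∀ n ω, 0 ≤ Q n ω)
    (hindep : iIndepFun (fun n ω => (M n ω, Q n ω)) P)
    (hident : ∀ n, IdentDistrib (fun ω => (M n ω, Q n ω)) (fun ω => (M 0 ω, Q 0 ω)) P P)
    (hM0 : P {ω | M 0 ω = 0} = 0)
    (hQ0 : P {ω | Q 0 ω = 0} < 1)
    (Pi : ℕ → Ω → ℝ) (hPi : ∀ n ω, Pi n ω = ∏ k ∈ Finset.range n, M k ω)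
    (hcrit : ∀ᵐ ω ∂P, (∀ ε > (0:ℝ), ∃ᶠ n in atTop, Pi n ω < ε) ∧
      (∀ c : ℝ, ∃ᶠ n in atTop, c < Pi n ω))
    (S : ℕ → Ω → ℝ) (hS : ∀ n ω, S n ω = ∑ k ∈ Finset.range n, Real.log (M k ω))
    (σs : ℕ → Ω → ℕ) (hσs0 : ∀ ω, σs 0 ω = 0)
    (hσs : ∀ n ω, σs (n+1) ω = sInf {k | σs n ω < k ∧ S k ω < S (σs n ω) ω})
    (X : ℝ → ℕ → Ω → ℝ)
    (hX0 : ∀ x ω, X x 0 ω = x)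
    (hXrec : ∀ x n ω, X x (n+1) ω = M n ω * X x n ω + Q n ω) :
    ((∀ x : ℝ, 0 ≤ x → ∀ᵐ ω ∂P, ∃ C : ℝ, ∃ᶠ n in atTop, |X x n ω - x| ≤ C) ↔
      (∀ x : ℝ, 0 ≤ x → ∀ᵐ ω ∂P, ∃ C : ℝ, ∃ᶠ n in atTop, |X x (σs n ω) ω - x| ≤ C)) ∧
    (∀ x : ℝ, 0 ≤ x → ∀ᵐ ω ∂P, ∀ n : ℕ, ∀ k : ℕ, k < σs (n+1) ω - σs n ω →
      X x (σs n ω) ω ≤ X x (σs n ω + k) ω) ∧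
    ((∀ x : ℝ, 0 ≤ x → ∀ᵐ ω ∂P, Tendsto (fun n => X x (σs n ω) ω) atTop atTop) →
      (∀ x : ℝ, 0 ≤ x → ∀ᵐ ω ∂P, Tendsto (fun n => X x n ω) atTop atTop)) := by
  have hMae : ∀ n, (∀ᵐ ω ∂P, M n ω ≠ 0) := by
    intro n
    have hmeasn : Measurable (fun ω => (M n ω, Q n ω)) := (hMmeas n).prodMk (hQmeas n)
    have hmeas0 : Measurable (fun ω => (M 0 ω, Q 0 ω)) := (hMmeas 0).prodMk (hQmeas 0)
    have hset : MeasurableSet (({0} : Set ℝ) ×ˢ (Set.univ : Set ℝ)) :=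
      (measurableSet_singleton 0).prod MeasurableSet.univ
    have hpre : ∀ (f g : Ω → ℝ),
        (fun ω => (f ω, g ω)) ⁻¹' (({0} : Set ℝ) ×ˢ (Set.univ : Set ℝ)) = {ω | f ω = 0} := by
      intro f g; ext ω; simp [Set.mem_prod, eq_comm]
    have h0 : P {ω | M n ω = 0} = P {ω | M 0 ω = 0} := by
      rw [← hpre (M n) (Q n), ← hpre (M 0) (Q 0),
        ← Measure.map_apply hmeasn hset, ← Measure.map_apply hmeas0 hset, (hident n).map_eq]
    have h1 : P {ω | M n ω = 0} = 0 := h0.trans hM0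
    rw [ae_iff]
    convert h1 using 2
    ext ω; simp
  have hMpos : ∀ᵐ ω ∂P, ∀ n, 0 < M n ω :=
    (ae_all_iff.mpr hMae).mono (fun ω h n => lt_of_le_of_ne (hMnonneg n ω) (Ne.symm (h n)))
  have hG : ∀ᵐ ω ∂P, (∀ n, 0 < M n ω) ∧ (∀ ε > (0:ℝ), ∃ᶠ n in atTop, Pi n ω < ε) :=
    hMpos.and (hcrit.mono (fun ω h => h.1))
  refine ⟨⟨?_, ?_⟩, ?_, ?_⟩
  · intro h x hx
    filter_upwards [h x hx, hG] with ω hrec hGω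
    obtain ⟨C, hC⟩ := hrec
    obtain ⟨_, d1, _, _⟩ := aux_facts (fun n => M n ω) (fun n => Q n ω) hGω.1
      (fun n => hQnonneg n ω) (fun n => Pi n ω) (fun n => hPi n ω) hGω.2
      (fun n => S n ω) (fun n => hS n ω) (fun n => σs n ω) (hσs0 ω) (fun n => hσs n ω)
      (fun n => X x n ω) x hx (hX0 x ω) (fun n => hXrec x n ω)
    exact ⟨x + C, d1 C hC⟩
  · intro h x hx
    filter_upwards [h x hx, hG] with ω hrec hGω
    obtain ⟨C, hC⟩ := hrec
    obtain ⟨_, _, d2, _⟩ := aux_facts (fun n => M n ω) (fun n => Q n ω) hGω.1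
      (fun n => hQnonneg n ω) (fun n => Pi n ω) (fun n => hPi n ω) hGω.2
      (fun n => S n ω) (fun n => hS n ω) (fun n => σs n ω) (hσs0 ω) (fun n => hσs n ω)
      (fun n => X x n ω) x hx (hX0 x ω) (fun n => hXrec x n ω)
    exact ⟨C, d2 C hC⟩
  · intro x hx
    filter_upwards [hG] with ω hGω
    obtain ⟨c2, _, _, _⟩ := aux_facts (fun n => M n ω) (fun n => Q n ω) hGω.1
      (fun n => hQnonneg n ω) (fun n => Pi n ω) (fun n => hPi n ω) hGω.2
      (fun n => S n ω) (fun n => hS n ω) (fun n => σs n ω) (hσs0 ω) (fun n => hσs n ω)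
      (fun n => X x n ω) x hx (hX0 x ω) (fun n => hXrec x n ω)
    exact c2
  · intro h x hx
    filter_upwards [h x hx, hG] with ω hT hGω
    obtain ⟨_, _, _, d3⟩ := aux_facts (fun n => M n ω) (fun n => Q n ω) hGω.1
      (fun n => hQnonneg n ω) (fun n => Pi n ω) (fun n => hPi n ω) hGω.2
      (fun n => S n ω) (fun n => hS n ω) (fun n => σs n ω) (hσs0 ω) (fun n => hσs n ω)
      (fun n => X x n ω) x hx (hX0 x ω) (fun n => hXrec x n ω)
    exact d3 hT
end

section
/- Let (M_n,Q_n)_{n≥1} be i.i.d. random vectors in [0,∞)^2 with generic copy (M,Q) satisfying P(M=0)=0, P(Q=0)<1, liminf_n Π_n=0 and limsup_n Π_n=+∞ a.s., and let σ be the first strictly descending ladder epoch of S_n (a.s. finite). Then the ladder variable Q^< := e^{S_σ} Σ_{k=1}^{σ} e^{−S_k} Q_k satisfies the almost sure two-sided bounds max_{1≤k≤σ} e^{S_σ−S_k} Q_k ≤ Q^< ≤ σ · max_{1≤k≤σ} Q_k; in particular, log Q^< ≤ log σ + max_{1≤k≤σ} log Q_k and log Q^< ≥ max_{1≤k≤σ}(log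 Q_k + S_σ − S_k) a.s. (in the extended reals). Moreover, if in addition Q ≤ aM+b a.s. for constants a,b>0, then Q^< ≤ (a+b)σ a.s., so that E log σ < ∞ implies E log_+Q^< < ∞. -/
open MeasureTheory ProbabilityTheory Filter

/-- Under criticality, the ladder variable
`Q^< = e^{S_σ} Σ_{k=1}^σ e^{−S_k} Q_k` satisfies a.s. the two-sided bounds
`max_{1≤k≤σ} e^{S_σ−S_k}Q_k ≤ Q^< ≤ σ·max_{1≤k≤σ} Q_k`; in particular (in the extended
reals) `log Q^< ≤ log σ + max_{1≤k≤σ} log Q_k` and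
`log Q^< ≥ max_{1≤k≤σ}(log Q_k + S_σ − S_k)` a.s. Moreover, if `Q ≤ aM+b` a.s. for
constants `a,b > 0`, then `Q^< ≤ (a+b)σ` a.s., and `E log σ < ∞` implies
`E log₊ Q^< < ∞`. -/
theorem ladder_variable_bounds
    {Ω : Type*} [MeasurableSpace Ω] (P : Measure Ω) [IsProbabilityMeasure P]
    (M Q : ℕ → Ω → ℝ)
    (hMmeas : ∀ n, Measurable (M n)) (hQmeas : ∀ n, Measurable (Q n))
    (hMnonneg : ∀ n ω, 0 ≤ M n ω) (hQnonneg : ∀ n ω, 0 ≤ Q n ω)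
    (hindep : iIndepFun (fun n ω => (M n ω, Q n ω)) P)
    (hident : ∀ n, IdentDistrib (fun ω => (M n ω, Q n ω)) (fun ω => (M 0 ω, Q 0 ω)) P P)
    (hM0 : P {ω | M 0 ω = 0} = 0)
    (hQ0 : P {ω | Q 0 ω = 0} < 1)
    (Pi : ℕ → Ω → ℝ) (hPi : ∀ n ω, Pi n ω = ∏ k ∈ Finset.range n, M k ω)
    (hcrit : ∀ᵐ ω ∂P, (∀ ε > (0:ℝ), ∃ᶠ n in atTop, Pi n ω < ε) ∧
      (∀ c : ℝ, ∃ᶠ n in atTop, c < Pi n ω))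
    (S : ℕ → Ω → ℝ) (hS : ∀ n ω, S n ω = ∑ k ∈ Finset.range n, Real.log (M k ω))
    (σ : Ω → ℕ) (hσ : ∀ ω, σ ω = sInf {k | 1 ≤ k ∧ S k ω < 0})
    (Qlad : Ω → ℝ)
    (hQlad : ∀ ω, Qlad ω = Real.exp (S (σ ω) ω) *
      ∑ k ∈ Finset.range (σ ω), Real.exp (-(S (k+1) ω)) * Q k ω) :
    (∀ᵐ ω ∂P,
      sSup ((fun k => Real.exp (S (σ ω) ω - S (k+1) ω) * Q k ω) '' {k | k < σ ω})
        ≤ Qlad ω ∧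
      Qlad ω ≤ (σ ω : ℝ) * sSup ((fun k => Q k ω) '' {k | k < σ ω}) ∧
      ENNReal.log (ENNReal.ofReal (Qlad ω)) ≤
        ENNReal.log ((σ ω : ℕ) : ENNReal) +
          ⨆ k ∈ Finset.range (σ ω), ENNReal.log (ENNReal.ofReal (Q k ω)) ∧
      (⨆ k ∈ Finset.range (σ ω),
          (ENNReal.log (ENNReal.ofReal (Q k ω)) + ((S (σ ω) ω - S (k+1) ω : ℝ) : EReal)))
        ≤ ENNReal.log (ENNReal.ofReal (Qlad ω))) ∧
    (∀ a b : ℝ, 0 < a → 0 < b → (∀ᵐ ω ∂P, ∀ n, Q n ω ≤ a * M n ω + b) →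
      (∀ᵐ ω ∂P, Qlad ω ≤ (a + b) * σ ω) ∧
      (Integrable (fun ω => Real.log (σ ω : ℝ)) P →
        Integrable (fun ω => Real.log (max (Qlad ω) 1)) P)) := by
  classical
  -- Basic facts about S and σ
  have hS0 : ∀ ω, S 0 ω = 0 := fun ω => by simp [hS]
  -- structure of the ladder epoch
  have key : ∀ ω, ∀ k, k < σ ω →
      S (σ ω) ω - S (k+1) ω ≤ 0 ∧ S (σ ω) ω - S k ω ≤ 0 := by
    intro ω k hk
    have hne : {j | 1 ≤ j ∧ S j ω < 0}.Nonempty := by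
      by_contra h
      rw [Set.not_nonempty_iff_eq_empty] at h
      have hσ0 := hσ ω
      rw [h, Nat.sInf_empty] at hσ0
      omega
    have hmem := Nat.sInf_mem hne
    rw [← hσ ω] at hmem
    have hneg : S (σ ω) ω < 0 := hmem.2
    have hpos : ∀ m, 1 ≤ m → m < σ ω → 0 ≤ S m ω := by
      intro m h1 h2
      by_contra h
      have hmm : m ∈ {j | 1 ≤ j ∧ S j ω < 0} := ⟨h1, lt_of_not_ge h⟩
      have := Nat.sInf_le hmm
      rw [← hσ ω] at this
      omega
    constructor
    · rcases eq_or_lt_of_le (Nat.succ_le_of_lt hk) with heq | hlt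
      · rw [← heq]; simp
      · have := hpos (k+1) (by omega) hlt
        linarith
    · rcases Nat.eq_zero_or_pos k with rfl | hk1
      · rw [hS0]; linarith
      · have := hpos k hk1 hk
        linarith
  -- rewrite Qlad as a sum of exponential terms
  have hQlad' : ∀ ω, Qlad ω =
      ∑ k ∈ Finset.range (σ ω), Real.exp (S (σ ω) ω - S (k+1) ω) * Q k ω := by
    intro ω
    rw [hQlad, Finset.mul_sum]
    refine Finset.sum_congr rfl fun k _ => ?_
    rw [← mul_assoc, ← Real.exp_add, ← sub_eq_add_neg]
  have htermnn : ∀ ω k, 0 ≤ Real.exp (S (σ ω) ω - S (k+1) ω) * Q k ω :=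
    fun ω k => mul_nonneg (Real.exp_pos _).le (hQnonneg _ _)
  have hQnn : ∀ ω, 0 ≤ Qlad ω := fun ω => by
    rw [hQlad']; exact Finset.sum_nonneg fun k _ => htermnn ω k
  have hterm_le : ∀ ω k, k < σ ω →
      Real.exp (S (σ ω) ω - S (k+1) ω) * Q k ω ≤ Qlad ω := by
    intro ω k hk
    rw [hQlad']
    exact Finset.single_le_sum (fun j _ => htermnn ω j) (Finset.mem_range.2 hk)
  -- the a.e. (in fact everywhere) two-sided bounds
  constructor
  · refine Eventually.of_forall fun ω => ?_
    refine ⟨?_, ?_, ?_, ?_⟩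
    · -- lower bound
      refine Real.sSup_le ?_ (hQnn ω)
      rintro x ⟨k, hk, rfl⟩
      exact hterm_le ω k hk
    · -- upper bound by σ · max Q
      rw [hQlad']
      calc ∑ k ∈ Finset.range (σ ω), Real.exp (S (σ ω) ω - S (k+1) ω) * Q k ω
          ≤ ∑ _k ∈ Finset.range (σ ω), sSup ((fun k => Q k ω) '' {k | k < σ ω}) := by
            refine Finset.sum_le_sum fun k hk => ?_
            have hk' := Finset.mem_range.1 hk
            have h1 : Real.exp (S (σ ω) ω - S (k+1) ω) ≤ 1 :=
              Real.exp_le_one_iff.2 (key ω k hk').1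
            have h2 : Real.exp (S (σ ω) ω - S (k+1) ω) * Q k ω ≤ Q k ω :=
              mul_le_of_le_one_left (hQnonneg k ω) h1
            refine h2.trans (le_csSup ?_ ⟨k, hk', rfl⟩)
            exact ((Set.finite_Iio (σ ω)).image _).bddAbove
        _ = (σ ω : ℝ) * sSup ((fun k => Q k ω) '' {k | k < σ ω}) := by
            rw [Finset.sum_const, Finset.card_range, nsmul_eq_mul]
    · -- log upper bound
      by_cases h0 : σ ω = 0
      · have : Qlad ω = 0 := by rw [hQlad, h0]; simp
        rw [this]
        simp [ENNReal.log_zero]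
      · have hneF : (Finset.range (σ ω)).Nonempty := Finset.nonempty_range_iff.2 h0
        obtain ⟨k0, hk0, hk0m⟩ := Finset.exists_mem_eq_sup' hneF (fun k => Q k ω)
        set m := (Finset.range (σ ω)).sup' hneF (fun k => Q k ω) with hm
        have hQm : Qlad ω ≤ (σ ω : ℝ) * m := by
          rw [hQlad']
          calc ∑ k ∈ Finset.range (σ ω), Real.exp (S (σ ω) ω - S (k+1) ω) * Q k ω
              ≤ ∑ _k ∈ Finset.range (σ ω), m := by
                refine Finset.sum_le_sum fun k hk => ?_
                have hk' := Finset.mem_range.1 hk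
                have h1 : Real.exp (S (σ ω) ω - S (k+1) ω) ≤ 1 :=
                  Real.exp_le_one_iff.2 (key ω k hk').1
                exact (mul_le_of_le_one_left (hQnonneg k ω) h1).trans
                  (Finset.le_sup' (fun k => Q k ω) hk)
            _ = (σ ω : ℝ) * m := by
                rw [Finset.sum_const, Finset.card_range, nsmul_eq_mul]
        calc ENNReal.log (ENNReal.ofReal (Qlad ω))
            ≤ ENNReal.log (ENNReal.ofReal ((σ ω : ℝ) * m)) :=
              ENNReal.log_monotone (ENNReal.ofReal_le_ofReal hQm)
          _ = ENNReal.log ((σ ω : ℕ) : ENNReal) + ENNReal.log (ENNReal.ofReal m) := by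
              rw [ENNReal.ofReal_mul (by positivity), ENNReal.ofReal_natCast,
                ENNReal.log_mul_add]
          _ ≤ ENNReal.log ((σ ω : ℕ) : ENNReal) +
              ⨆ k ∈ Finset.range (σ ω), ENNReal.log (ENNReal.ofReal (Q k ω)) := by
              refine add_le_add_right ?_ _
              rw [hk0m]
              exact le_biSup (fun k => ENNReal.log (ENNReal.ofReal (Q k ω))) hk0
    · -- log lower bound
      refine iSup₂_le fun k hk => ?_
      have hk' := Finset.mem_range.1 hk
      have h1 := hterm_le ω k hk'
      have h2 : ENNReal.log (ENNReal.ofReal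
          (Real.exp (S (σ ω) ω - S (k+1) ω) * Q k ω)) ≤
          ENNReal.log (ENNReal.ofReal (Qlad ω)) :=
        ENNReal.log_monotone (ENNReal.ofReal_le_ofReal h1)
      rw [ENNReal.ofReal_mul (Real.exp_pos _).le, ENNReal.log_mul_add,
        ENNReal.log_ofReal_of_pos (Real.exp_pos _), Real.log_exp] at h2
      rw [add_comm]
      exact h2
  · -- second part
    intro a b ha hb hab
    -- a.e. all M n ≠ 0
    have hMn0 : ∀ n, P {ω | M n ω = 0} = 0 := by
      intro n
      have hsm : MeasurableSet {p : ℝ × ℝ | p.1 = 0} :=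
        (measurableSet_singleton (0:ℝ)).preimage measurable_fst
      have := (hident n).measure_mem_eq hsm
      simpa using this.trans hM0
    have hMae : ∀ᵐ ω ∂P, ∀ n, M n ω ≠ 0 := by
      rw [ae_all_iff]
      intro n
      have : {ω | ¬ M n ω ≠ 0} = {ω | M n ω = 0} := by ext ω; simp
      rw [ae_iff, this]
      exact hMn0 n
    have hbound : ∀ᵐ ω ∂P, Qlad ω ≤ (a + b) * σ ω := by
      filter_upwards [hab, hMae] with ω hQab hMne
      rw [hQlad']
      calc ∑ k ∈ Finset.range (σ ω), Real.exp (S (σ ω) ω - S (k+1) ω) * Q k ω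
          ≤ ∑ _k ∈ Finset.range (σ ω), (a + b) := by
            refine Finset.sum_le_sum fun k hk => ?_
            have hk' := Finset.mem_range.1 hk
            have e1 : Real.exp (S (σ ω) ω - S (k+1) ω) ≤ 1 :=
              Real.exp_le_one_iff.2 (key ω k hk').1
            have e0 : Real.exp (S (σ ω) ω - S k ω) ≤ 1 :=
              Real.exp_le_one_iff.2 (key ω k hk').2
            have hMk : 0 < M k ω := lt_of_le_of_ne (hMnonneg k ω) (Ne.symm (hMne k))
            have hSucc : S (k+1) ω = S k ω + Real.log (M k ω) := by
              rw [hS, hS, Finset.sum_range_succ]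
            have hexpM : Real.exp (S (σ ω) ω - S (k+1) ω) * M k ω =
                Real.exp (S (σ ω) ω - S k ω) := by
              rw [hSucc, show S (σ ω) ω - (S k ω + Real.log (M k ω)) =
                (S (σ ω) ω - S k ω) - Real.log (M k ω) by ring,
                Real.exp_sub, Real.exp_log hMk, div_mul_cancel₀ _ (hMne k)]
            calc Real.exp (S (σ ω) ω - S (k+1) ω) * Q k ω
                ≤ Real.exp (S (σ ω) ω - S (k+1) ω) * (a * M k ω + b) :=
                  mul_le_mul_of_nonneg_left (hQab k) (Real.exp_pos _).le
              _ = a * (Real.exp (S (σ ω) ω - S (k+1) ω) * M k ω) +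
                  b * Real.exp (S (σ ω) ω - S (k+1) ω) := by ring
              _ = a * Real.exp (S (σ ω) ω - S k ω) +
                  b * Real.exp (S (σ ω) ω - S (k+1) ω) := by rw [hexpM]
              _ ≤ a * 1 + b * 1 :=
                  add_le_add (mul_le_mul_of_nonneg_left e0 ha.le)
                    (mul_le_mul_of_nonneg_left e1 hb.le)
              _ = a + b := by ring
        _ = (a + b) * σ ω := by
            rw [Finset.sum_const, Finset.card_range, nsmul_eq_mul, mul_comm]
    refine ⟨hbound, ?_⟩
    intro hint
    -- measurability
    have hSmeas : ∀ n, Measurable (S n) := by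
      intro n
      have : S n = fun ω => ∑ k ∈ Finset.range n, Real.log (M k ω) := funext (hS n)
      rw [this]
      exact Finset.measurable_sum _ fun k _ => Real.measurable_log.comp (hMmeas k)
    have hσmeas : Measurable σ := by
      have hσf : σ = fun ω => sInf {k | 1 ≤ k ∧ S k ω < 0} := funext hσ
      rw [hσf]
      apply measurable_to_countable'
      intro n
      have hBk : ∀ k : ℕ, MeasurableSet {ω | 1 ≤ k ∧ S k ω < 0} := by
        intro k
        have : {ω | 1 ≤ k ∧ S k ω < 0} = {ω : Ω | 1 ≤ k} ∩ {ω | S k ω < 0} := by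
          ext ω; simp [Set.mem_setOf_eq, Set.mem_inter_iff]
        rw [this]
        exact (MeasurableSet.const _).inter (measurableSet_lt (hSmeas k) measurable_const)
      rcases Nat.eq_zero_or_pos n with rfl | hn
      · have : (fun ω => sInf {k | 1 ≤ k ∧ S k ω < 0}) ⁻¹' {0} =
            ⋂ k, {ω | 1 ≤ k ∧ S k ω < 0}ᶜ := by
          ext ω
          simp only [Set.mem_preimage, Set.mem_singleton_iff, Set.mem_iInter,
            Set.mem_compl_iff, Set.mem_setOf_eq]
          constructor
          · intro h k hk
            have hmem := Nat.sInf_mem (⟨k, hk⟩ : {j | 1 ≤ j ∧ S j ω < 0}.Nonempty)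
            rw [h] at hmem
            exact absurd hmem.1 (by omega)
          · intro h
            have : {k | 1 ≤ k ∧ S k ω < 0} = ∅ :=
              Set.eq_empty_iff_forall_notMem.2 h
            rw [this, Nat.sInf_empty]
        rw [this]
        exact MeasurableSet.iInter fun k => (hBk k).compl
      · have : (fun ω => sInf {k | 1 ≤ k ∧ S k ω < 0}) ⁻¹' {n} =
            {ω | 1 ≤ n ∧ S n ω < 0} ∩
              ⋂ j, {ω | ¬ (j < n ∧ 1 ≤ j ∧ S j ω < 0)} := by
          ext ω
          simp only [Set.mem_preimage, Set.mem_singleton_iff, Set.mem_inter_iff,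
            Set.mem_iInter, Set.mem_setOf_eq, not_and]
          constructor
          · intro h
            have hne : {j | 1 ≤ j ∧ S j ω < 0}.Nonempty := by
              by_contra hc
              rw [Set.not_nonempty_iff_eq_empty] at hc
              rw [hc, Nat.sInf_empty] at h
              omega
            have hmem := Nat.sInf_mem hne
            rw [h] at hmem
            refine ⟨hmem, fun j hj h1 h2 => ?_⟩
            have := Nat.sInf_le (show j ∈ {j | 1 ≤ j ∧ S j ω < 0} from ⟨h1, h2⟩)
            omega
          · rintro ⟨hmem, hlt⟩
            refine le_antisymm (Nat.sInf_le hmem) ?_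
            by_contra hc
            push_neg at hc
            have hne : {j | 1 ≤ j ∧ S j ω < 0}.Nonempty := ⟨n, hmem⟩
            have hm := Nat.sInf_mem hne
            exact hlt _ hc hm.1 hm.2
        rw [this]
        refine (hBk n).inter (MeasurableSet.iInter fun j => ?_)
        have : {ω | ¬ (j < n ∧ 1 ≤ j ∧ S j ω < 0)} =
            ({ω : Ω | j < n} ∩ {ω | 1 ≤ j ∧ S j ω < 0})ᶜ := by
          ext ω; simp [Set.mem_setOf_eq, and_assoc]
        rw [this]
        exact ((MeasurableSet.const _).inter (hBk j)).compl
    have hQladmeas : Measurable Qlad := by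
      have hF : ∀ n : ℕ, Measurable (fun ω => Real.exp (S n ω) *
          ∑ k ∈ Finset.range n, Real.exp (-(S (k+1) ω)) * Q k ω) := fun n =>
        (Real.measurable_exp.comp (hSmeas n)).mul
          (Finset.measurable_sum _ fun k _ =>
            (Real.measurable_exp.comp (hSmeas (k+1)).neg).mul (hQmeas k))
      have hQf : Qlad = fun ω =>
          (fun p : Ω × ℕ => Real.exp (S p.2 p.1) *
            ∑ k ∈ Finset.range p.2, Real.exp (-(S (k+1) p.1)) * Q k p.1) (ω, σ ω) :=
        funext fun ω => by rw [hQlad]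
      rw [hQf]
      have hunc : Measurable (fun p : Ω × ℕ => Real.exp (S p.2 p.1) *
          ∑ k ∈ Finset.range p.2, Real.exp (-(S (k+1) p.1)) * Q k p.1) :=
        measurable_from_prod_countable_left fun n => hF n
      exact hunc.comp (measurable_id.prodMk hσmeas)
    -- domination
    have hdom : Integrable (fun ω => Real.log (a + b + 1) + Real.log (σ ω : ℝ)) P :=
      (integrable_const _).add hint
    refine Integrable.mono' hdom ?_ ?_
    · exact (Real.measurable_log.comp
        (hQladmeas.max measurable_const)).aestronglyMeasurable
    · filter_upwards [hbound] with ω hQσ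
      have h1 : (1:ℝ) ≤ max (Qlad ω) 1 := le_max_right _ _
      rw [Real.norm_eq_abs, abs_of_nonneg (Real.log_nonneg h1)]
      rcases Nat.eq_zero_or_pos (σ ω) with h0 | hpos
      · have hQ0' : Qlad ω ≤ 0 := by
          rw [h0] at hQσ; simpa using hQσ
        have : max (Qlad ω) 1 = 1 := max_eq_right (hQ0'.trans zero_le_one)
        rw [this, Real.log_one, h0]
        simp only [Nat.cast_zero, Real.log_zero, add_zero]
        exact Real.log_nonneg (by linarith)
      · have hσ1 : (1:ℝ) ≤ (σ ω : ℝ) := by exact_mod_cast hpos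
        have hmax : max (Qlad ω) 1 ≤ (a + b + 1) * (σ ω : ℝ) := by
          refine max_le ?_ ?_
          · refine hQσ.trans ?_
            refine mul_le_mul_of_nonneg_right (by linarith) (by linarith)
          · nlinarith
        calc Real.log (max (Qlad ω) 1) ≤ Real.log ((a + b + 1) * (σ ω : ℝ)) :=
              Real.log_le_log (by linarith) hmax
          _ = Real.log (a + b + 1) + Real.log (σ ω : ℝ) :=
              Real.log_mul (by linarith) (by linarith)
end
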